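/- Second-order remainder identity (Lemma 1): with Rem := E[ ν̃(X,T,Y) ] − ψ_t(P), one has Rem = E[ ( μ_Y(X)·m̃₁(X) − m̃_Y(X)·μ₁(X) ) / ( π̃_t(X)·m̃₁(X) ) · ( π̃_{1−t}(X)·π_t(X)/m̃₁(X) − π_{1−t}(X)·π̃_t(X)/μ₁(X) ) ]. -/

import Mathlib

open MeasureTheory Real

/-- Tower property: integrating `g(X)·f` equals integrating `g(X)·E[f|σ(X)]`. -/
private lemma tower_mul {Ω : Type*} [MeasurableSpace Ω] (P : Measure Ω) [IsProbabilityMeasure P]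
    {p : ℕ} {X : Ω → (Fin p → ℝ)} (hX : Measurable X)
    {f : Ω → ℝ} (hf : Integrable f P) {g : (Fin p → ℝ) → ℝ} (hg : Measurable g)
    (hgb : ∃ C, ∀ x, |g x| ≤ C) :
    ∫ ω, g (X ω) * f ω ∂P =
      ∫ ω, g (X ω) * (P[f | MeasurableSpace.comap X inferInstance]) ω ∂P := by
  have hm : MeasurableSpace.comap X inferInstance ≤ ‹MeasurableSpace Ω› := hX.comap_le
  have hXm : @Measurable Ω (Fin p → ℝ) (MeasurableSpace.comap X inferInstance) _ X :=
    fun s hs => ⟨s, hs, rfl⟩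
  have hgm : StronglyMeasurable[MeasurableSpace.comap X inferInstance] fun ω => g (X ω) :=
    (hg.comp hXm).stronglyMeasurable
  obtain ⟨C, hC⟩ := hgb
  have hint : Integrable (fun ω => g (X ω) * f ω) P :=
    hf.bdd_mul ((hg.comp hX).aestronglyMeasurable)
      (c := C) (Filter.Eventually.of_forall fun ω => by simpa [Real.norm_eq_abs] using hC (X ω))
  calc ∫ ω, g (X ω) * f ω ∂P
      = ∫ ω, (P[(fun ω => g (X ω) * f ω) | MeasurableSpace.comap X inferInstance]) ω ∂P :=
        (integral_condExp hm).symm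
    _ = ∫ ω, g (X ω) * (P[f | MeasurableSpace.comap X inferInstance]) ω ∂P := by
        refine integral_congr_ae ?_
        filter_upwards [condExp_mul_of_stronglyMeasurable_left hgm hint hf] with ω hω
        exact hω

/-- Second-order remainder identity (Lemma 1): with
`Rem := E[ν̃(X,T,Y)] − ψ_t(P)`, one has
`Rem = E[((μ_Y·m̃₁ − m̃_Y·μ₁)/(π̃_t·m̃₁)) · (π̃_{1−t}·π_t/m̃₁ − π_{1−t}·π̃_t/μ₁)]`. -/
theorem second_order_remainder_identity
    {Ω : Type*} [MeasurableSpace Ω] (P : Measure Ω) [IsProbabilityMeasure P]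
    {p : ℕ} (X : Ω → (Fin p → ℝ)) (T : Ω → ℝ) (Y : Ω → ℝ)
    (hX : Measurable X) (hT : Measurable T) (hY : Measurable Y)
    (hTval : ∀ ω, T ω = 0 ∨ T ω = 1)
    (t : ℝ) (ht : t = 0 ∨ t = 1)
    (s : ℝ → ℝ) (hs : Measurable s) (γ : ℝ)
    -- versions of the conditional treatment probabilities given `σ(X)`
    (πt πs : (Fin p → ℝ) → ℝ) (hπt : Measurable πt) (hπs : Measurable πs)
    (hπtv : (fun ω => πt (X ω)) =ᵐ[P]
      P[(fun ω => if T ω = t then (1 : ℝ) else 0) | MeasurableSpace.comap X inferInstance])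
    (hπsv : (fun ω => πs (X ω)) =ᵐ[P]
      P[(fun ω => if T ω = 1 - t then (1 : ℝ) else 0) | MeasurableSpace.comap X inferInstance])
    -- positivity
    (ε : ℝ) (hε : 0 < ε)
    (hpos : ∀ᵐ ω ∂P, ε ≤ πt (X ω) ∧ πt (X ω) ≤ 1 - ε)
    -- integrability assumptions
    (hYInt : Integrable Y P)
    (hExpInt : Integrable (fun ω => Real.exp (γ * s (Y ω))) P)
    (hYExpInt : Integrable (fun ω => Y ω * Real.exp (γ * s (Y ω))) P)
    -- versions of the conditional means: `muY = μ_t(Y;X)`, `muE = μ₁(X)`, `muYE = μ_Y(X)`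
    (muY muE muYE : (Fin p → ℝ) → ℝ)
    (hmuYm : Measurable muY) (hmuEm : Measurable muE) (hmuYEm : Measurable muYE)
    (hmuY : (fun ω => muY (X ω)) =ᵐ[P] fun ω =>
      (P[(fun ω => Y ω * (if T ω = t then (1 : ℝ) else 0)) |
        MeasurableSpace.comap X inferInstance]) ω / πt (X ω))
    (hmuE : (fun ω => muE (X ω)) =ᵐ[P] fun ω =>
      (P[(fun ω => Real.exp (γ * s (Y ω)) * (if T ω = t then (1 : ℝ) else 0)) |
        MeasurableSpace.comap X inferInstance]) ω / πt (X ω))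
    (hmuYE : (fun ω => muYE (X ω)) =ᵐ[P] fun ω =>
      (P[(fun ω => Y ω * Real.exp (γ * s (Y ω)) * (if T ω = t then (1 : ℝ) else 0)) |
        MeasurableSpace.comap X inferInstance]) ω / πt (X ω))
    (hmuEpos : ∀ᵐ ω ∂P, ε ≤ muE (X ω))
    -- nuisance functions `π̃_t`, `m̃₁`, `m̃_Y`
    (tπt tm1 tmY : (Fin p → ℝ) → ℝ)
    (htπtm : Measurable tπt) (htm1m : Measurable tm1) (htmYm : Measurable tmY)
    (htπt_mem : ∀ x, tπt x ∈ Set.Icc ε (1 - ε))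
    (htm1_mem : ∀ x, ε ≤ tm1 x)
    (htmY_bdd : ∃ C, ∀ x, |tmY x| ≤ C) :
    -- `Rem = E[ν̃] − ψ_t(P)` equals the second-order product expression
    (∫ ω, ((if T ω = t then (1 : ℝ) else 0) *
          (Y ω + Y ω * Real.exp (γ * s (Y ω)) * (1 - tπt (X ω)) / (tπt (X ω) * tm1 (X ω))
            - Real.exp (γ * s (Y ω)) * (1 - tπt (X ω)) * tmY (X ω) /
                (tπt (X ω) * tm1 (X ω) ^ 2))
        + (if T ω = 1 - t then (1 : ℝ) else 0) * (tmY (X ω) / tm1 (X ω))) ∂P)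
      - (∫ ω, (muY (X ω) * πt (X ω) + (muYE (X ω) / muE (X ω)) * πs (X ω)) ∂P) =
    ∫ ω, ((muYE (X ω) * tm1 (X ω) - tmY (X ω) * muE (X ω)) / (tπt (X ω) * tm1 (X ω))) *
        ((1 - tπt (X ω)) * πt (X ω) / tm1 (X ω) - πs (X ω) * tπt (X ω) / muE (X ω)) ∂P := by
  classical
  obtain ⟨C, hC⟩ := htmY_bdd
  have hC0 : 0 ≤ C := (abs_nonneg _).trans (hC 0)
  have hεπ : ε ≤ 1 - ε := (htπt_mem 0).1.trans (htπt_mem 0).2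
  have hm : MeasurableSpace.comap X inferInstance ≤ ‹MeasurableSpace Ω› := hX.comap_le
  -- measurability of indicators
  have hitM : Measurable (fun ω => if T ω = t then (1 : ℝ) else 0) :=
    Measurable.ite (hT (measurableSet_singleton t)) measurable_const measurable_const
  have hisM : Measurable (fun ω => if T ω = 1 - t then (1 : ℝ) else 0) :=
    Measurable.ite (hT (measurableSet_singleton (1 - t))) measurable_const measurable_const
  -- the four base integrable functions
  have hE1 : Integrable (fun ω => Y ω * (if T ω = t then (1 : ℝ) else 0)) P := by
    refine Integrable.mono' hYInt.abs ((hY.mul hitM).aestronglyMeasurable)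
      (Filter.Eventually.of_forall fun ω => ?_)
    by_cases h : T ω = t <;> simp [h, Real.norm_eq_abs, abs_nonneg, le_abs_self, Real.exp_nonneg, abs_mul, Real.abs_exp]
  have hE2 : Integrable (fun ω => Real.exp (γ * s (Y ω)) * (if T ω = t then (1 : ℝ) else 0)) P := by
    refine Integrable.mono' hExpInt.abs
      (((Real.measurable_exp.comp ((hs.comp hY).const_mul γ)).mul hitM).aestronglyMeasurable)
      (Filter.Eventually.of_forall fun ω => ?_)
    by_cases h : T ω = t <;> simp [h, Real.norm_eq_abs, abs_nonneg, le_abs_self, Real.exp_nonneg, abs_mul, Real.abs_exp]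
  have hE3 : Integrable (fun ω => Y ω * Real.exp (γ * s (Y ω)) *
      (if T ω = t then (1 : ℝ) else 0)) P := by
    refine Integrable.mono' hYExpInt.abs
      (((hY.mul (Real.measurable_exp.comp ((hs.comp hY).const_mul γ))).mul
        hitM).aestronglyMeasurable)
      (Filter.Eventually.of_forall fun ω => ?_)
    by_cases h : T ω = t <;>
      simp [h, Real.norm_eq_abs, abs_nonneg, le_abs_self, Real.exp_nonneg, abs_mul,
        Real.abs_exp] <;> positivity
  have hE4 : Integrable (fun ω => if T ω = 1 - t then (1 : ℝ) else 0) P := by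
    refine Integrable.mono' (integrable_const (1 : ℝ)) hisM.aestronglyMeasurable
      (Filter.Eventually.of_forall fun ω => ?_)
    by_cases h : T ω = 1 - t <;> simp [h]
  -- nuisance-ratio functions and their bounds
  set g1 : (Fin p → ℝ) → ℝ := fun x => (1 - tπt x) / (tπt x * tm1 x) with hg1def
  set g2 : (Fin p → ℝ) → ℝ := fun x => (1 - tπt x) * tmY x / (tπt x * tm1 x ^ 2) with hg2def
  set g3 : (Fin p → ℝ) → ℝ := fun x => tmY x / tm1 x with hg3def
  have hg1m : Measurable g1 := (measurable_const.sub htπtm).div (htπtm.mul htm1m)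
  have hg2m : Measurable g2 :=
    ((measurable_const.sub htπtm).mul htmYm).div (htπtm.mul (htm1m.pow_const 2))
  have hg3m : Measurable g3 := htmYm.div htm1m
  have hpb : ∀ x, 0 < tπt x := fun x => lt_of_lt_of_le hε (htπt_mem x).1
  have hmb : ∀ x, 0 < tm1 x := fun x => lt_of_lt_of_le hε (htm1_mem x)
  have hnum1 : ∀ x, |1 - tπt x| ≤ 1 := by
    intro x
    have h1 := (htπt_mem x).1; have h2 := (htπt_mem x).2
    rw [abs_le]; constructor <;> nlinarith
  have hg1b : ∀ x, |g1 x| ≤ 1 / (ε * ε) := by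
    intro x
    have hden : ε * ε ≤ tπt x * tm1 x :=
      mul_le_mul (htπt_mem x).1 (htm1_mem x) hε.le (hε.le.trans (htπt_mem x).1)
    rw [hg1def, abs_div, abs_of_pos (mul_pos (hpb x) (hmb x))]
    exact div_le_div₀ zero_le_one (hnum1 x) (mul_pos hε hε) hden
  have hg2b : ∀ x, |g2 x| ≤ C / (ε * (ε * ε)) := by
    intro x
    have hden : ε * (ε * ε) ≤ tπt x * tm1 x ^ 2 := by
      have h1 := (htπt_mem x).1; have h2 := htm1_mem x
      have h3 : ε * ε ≤ tm1 x * tm1 x := mul_le_mul h2 h2 hε.le (hε.le.trans h2)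
      have h4 : ε * (ε * ε) ≤ tπt x * (tm1 x * tm1 x) :=
        mul_le_mul h1 h3 (by positivity) (hε.le.trans h1)
      calc ε * (ε * ε) ≤ tπt x * (tm1 x * tm1 x) := h4
        _ = tπt x * tm1 x ^ 2 := by ring
    have hnum : |(1 - tπt x) * tmY x| ≤ C := by
      rw [abs_mul]
      calc |1 - tπt x| * |tmY x| ≤ 1 * C :=
        mul_le_mul (hnum1 x) (hC x) (abs_nonneg _) zero_le_one
      _ = C := one_mul C
    rw [hg2def, abs_div, abs_of_pos (mul_pos (hpb x) (pow_pos (hmb x) 2))]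
    exact div_le_div₀ hC0 hnum (by positivity) hden
  have hg3b : ∀ x, |g3 x| ≤ C / ε := by
    intro x
    rw [hg3def, abs_div, abs_of_pos (hmb x)]
    exact div_le_div₀ hC0 (hC x) hε (htm1_mem x)
  -- abbreviations for the conditional expectations
  set c1 := P[(fun ω => Y ω * (if T ω = t then (1 : ℝ) else 0)) |
    MeasurableSpace.comap X inferInstance] with hc1def
  set c2 := P[(fun ω => Real.exp (γ * s (Y ω)) * (if T ω = t then (1 : ℝ) else 0)) |
    MeasurableSpace.comap X inferInstance] with hc2def
  set c3 := P[(fun ω => Y ω * Real.exp (γ * s (Y ω)) * (if T ω = t then (1 : ℝ) else 0)) |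
    MeasurableSpace.comap X inferInstance] with hc3def
  set c4 := P[(fun ω => if T ω = 1 - t then (1 : ℝ) else 0) |
    MeasurableSpace.comap X inferInstance] with hc4def
  have hc1int : Integrable c1 P := by rw [hc1def]; exact integrable_condExp
  have hc2int : Integrable c2 P := by rw [hc2def]; exact integrable_condExp
  have hc3int : Integrable c3 P := by rw [hc3def]; exact integrable_condExp
  have hc4int : Integrable c4 P := by rw [hc4def]; exact integrable_condExp
  -- integrability of products of condexp with bounded functions of X
  have hint3 : Integrable (fun ω => g1 (X ω) * c3 ω) P :=
    hc3int.bdd_mul ((hg1m.comp hX).aestronglyMeasurable)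
      (c := 1 / (ε * ε)) (Filter.Eventually.of_forall fun ω => by simpa [Real.norm_eq_abs] using hg1b (X ω))
  have hint2 : Integrable (fun ω => g2 (X ω) * c2 ω) P :=
    hc2int.bdd_mul ((hg2m.comp hX).aestronglyMeasurable)
      (c := C / (ε * (ε * ε))) (Filter.Eventually.of_forall fun ω => by simpa [Real.norm_eq_abs] using hg2b (X ω))
  have hint4 : Integrable (fun ω => g3 (X ω) * c4 ω) P :=
    hc4int.bdd_mul ((hg3m.comp hX).aestronglyMeasurable)
      (c := C / ε) (Filter.Eventually.of_forall fun ω => by simpa [Real.norm_eq_abs] using hg3b (X ω))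
  have hintE3 : Integrable (fun ω => g1 (X ω) * (Y ω * Real.exp (γ * s (Y ω)) *
      (if T ω = t then (1 : ℝ) else 0))) P :=
    hE3.bdd_mul ((hg1m.comp hX).aestronglyMeasurable)
      (c := 1 / (ε * ε)) (Filter.Eventually.of_forall fun ω => by simpa [Real.norm_eq_abs] using hg1b (X ω))
  have hintE2 : Integrable (fun ω => g2 (X ω) * (Real.exp (γ * s (Y ω)) *
      (if T ω = t then (1 : ℝ) else 0))) P :=
    hE2.bdd_mul ((hg2m.comp hX).aestronglyMeasurable)
      (c := C / (ε * (ε * ε))) (Filter.Eventually.of_forall fun ω => by simpa [Real.norm_eq_abs] using hg2b (X ω))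
  have hintE4 : Integrable (fun ω => g3 (X ω) *
      (if T ω = 1 - t then (1 : ℝ) else 0)) P :=
    hE4.bdd_mul ((hg3m.comp hX).aestronglyMeasurable)
      (c := C / ε) (Filter.Eventually.of_forall fun ω => by simpa [Real.norm_eq_abs] using hg3b (X ω))
  -- Step 1: rewrite the first integral via the tower property
  have step1 : (∫ ω, ((if T ω = t then (1 : ℝ) else 0) *
          (Y ω + Y ω * Real.exp (γ * s (Y ω)) * (1 - tπt (X ω)) / (tπt (X ω) * tm1 (X ω))
            - Real.exp (γ * s (Y ω)) * (1 - tπt (X ω)) * tmY (X ω) /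
                (tπt (X ω) * tm1 (X ω) ^ 2))
        + (if T ω = 1 - t then (1 : ℝ) else 0) * (tmY (X ω) / tm1 (X ω))) ∂P)
      = ∫ ω, (c1 ω + g1 (X ω) * c3 ω - g2 (X ω) * c2 ω + g3 (X ω) * c4 ω) ∂P := by
    have hsplit : (∫ ω, ((if T ω = t then (1 : ℝ) else 0) *
          (Y ω + Y ω * Real.exp (γ * s (Y ω)) * (1 - tπt (X ω)) / (tπt (X ω) * tm1 (X ω))
            - Real.exp (γ * s (Y ω)) * (1 - tπt (X ω)) * tmY (X ω) /
                (tπt (X ω) * tm1 (X ω) ^ 2))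
        + (if T ω = 1 - t then (1 : ℝ) else 0) * (tmY (X ω) / tm1 (X ω))) ∂P)
        = ∫ ω, ((Y ω * (if T ω = t then (1 : ℝ) else 0))
            + g1 (X ω) * (Y ω * Real.exp (γ * s (Y ω)) * (if T ω = t then (1 : ℝ) else 0))
            - g2 (X ω) * (Real.exp (γ * s (Y ω)) * (if T ω = t then (1 : ℝ) else 0))
            + g3 (X ω) * (if T ω = 1 - t then (1 : ℝ) else 0)) ∂P := by
      refine integral_congr_ae (Filter.Eventually.of_forall fun ω => ?_)
      simp only [hg1def, hg2def, hg3def]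
      ring
    have h12 : Integrable (fun ω => (Y ω * (if T ω = t then (1 : ℝ) else 0))
        + g1 (X ω) * (Y ω * Real.exp (γ * s (Y ω)) * (if T ω = t then (1 : ℝ) else 0))) P :=
      hE1.add hintE3
    have h123 : Integrable (fun ω => (Y ω * (if T ω = t then (1 : ℝ) else 0))
        + g1 (X ω) * (Y ω * Real.exp (γ * s (Y ω)) * (if T ω = t then (1 : ℝ) else 0))
        - g2 (X ω) * (Real.exp (γ * s (Y ω)) * (if T ω = t then (1 : ℝ) else 0))) P :=
      h12.sub hintE2
    have hc12 : Integrable (fun ω => c1 ω + g1 (X ω) * c3 ω) P :=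
      hc1int.add hint3
    have hc123 : Integrable (fun ω => c1 ω + g1 (X ω) * c3 ω - g2 (X ω) * c2 ω) P :=
      hc12.sub hint2
    rw [hsplit, integral_add h123 hintE4, integral_sub h12 hintE2, integral_add hE1 hintE3,
      integral_add hc123 hint4, integral_sub hc12 hint2,
      integral_add hc1int hint3,
      hc1def, integral_condExp hm,
      tower_mul P hX hE3 hg1m ⟨1 / (ε * ε), hg1b⟩,
      tower_mul P hX hE2 hg2m ⟨C / (ε * (ε * ε)), hg2b⟩,
      tower_mul P hX hE4 hg3m ⟨C / ε, hg3b⟩,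
      hc2def, hc3def, hc4def]
  -- a.e. facts: πs ∈ [0,1]
  have hc4_01 : ∀ᵐ ω ∂P, 0 ≤ πs (X ω) ∧ πs (X ω) ≤ 1 := by
    have h0 : (0 : Ω → ℝ) ≤ᵐ[P] c4 :=
      condExp_nonneg (Filter.Eventually.of_forall fun ω => by by_cases h : T ω = 1 - t <;> simp [h])
    have h1 : c4 ≤ᵐ[P] fun _ => (1 : ℝ) := by
      have := condExp_mono (μ := P) (m := MeasurableSpace.comap X inferInstance) hE4
        (integrable_const (1 : ℝ))
        (Filter.Eventually.of_forall fun ω => by by_cases h : T ω = 1 - t <;> simp [h])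
      rwa [condExp_const hm (1 : ℝ)] at this
    filter_upwards [h0, h1, hπsv] with ω h0 h1 h2
    rw [h2]; exact ⟨h0, h1⟩
  -- integrability of the ψ integrand
  have hψ1 : Integrable (fun ω => muY (X ω) * πt (X ω)) P := by
    refine hc1int.congr ?_
    filter_upwards [hmuY, hpos] with ω h1 h2
    have hq : πt (X ω) ≠ 0 := ne_of_gt (lt_of_lt_of_le hε h2.1)
    rw [hc1def] at h1 ⊢
    rw [h1, div_mul_cancel₀ _ hq]
  have hψ2 : Integrable (fun ω => (muYE (X ω) / muE (X ω)) * πs (X ω)) P := by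
    refine Integrable.mono' (hc3int.abs.mul_const (1 / (ε * ε)))
      (((hmuYEm.comp hX).div (hmuEm.comp hX)).mul (hπs.comp hX)).aestronglyMeasurable ?_
    filter_upwards [hmuYE, hpos, hmuEpos, hc4_01] with ω h1 h2 h3 h4
    have hq : (0 : ℝ) < πt (X ω) := lt_of_lt_of_le hε h2.1
    have he : (0 : ℝ) < muE (X ω) := lt_of_lt_of_le hε h3
    rw [Real.norm_eq_abs, h1, div_div, abs_mul, abs_div]
    have hden : ε * ε ≤ |πt (X ω) * muE (X ω)| := by
      rw [abs_of_pos (mul_pos hq he)]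
      exact mul_le_mul h2.1 h3 hε.le hq.le
    calc |c3 ω| / |πt (X ω) * muE (X ω)| * |πs (X ω)|
        ≤ |c3 ω| / (ε * ε) * 1 := by
          refine mul_le_mul ?_ (by rw [abs_of_nonneg h4.1]; exact h4.2) (abs_nonneg _)
            (by positivity)
          exact div_le_div₀ (abs_nonneg _) le_rfl (by positivity) hden
      _ = |c3 ω| * (1 / (ε * ε)) := by ring
  have hψint : Integrable (fun ω => muY (X ω) * πt (X ω)
      + (muYE (X ω) / muE (X ω)) * πs (X ω)) P := hψ1.add hψ2
  -- the combined condexp integrand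
  have hcombint : Integrable (fun ω => c1 ω + g1 (X ω) * c3 ω - g2 (X ω) * c2 ω
      + g3 (X ω) * c4 ω) P :=
    ((hc1int.add hint3).sub hint2).add hint4
  -- key a.e. identity
  have haeq : (fun ω => c1 ω + g1 (X ω) * c3 ω - g2 (X ω) * c2 ω + g3 (X ω) * c4 ω)
      =ᵐ[P] fun ω => (muY (X ω) * πt (X ω) + (muYE (X ω) / muE (X ω)) * πs (X ω))
        + ((muYE (X ω) * tm1 (X ω) - tmY (X ω) * muE (X ω)) / (tπt (X ω) * tm1 (X ω))) *
          ((1 - tπt (X ω)) * πt (X ω) / tm1 (X ω) - πs (X ω) * tπt (X ω) / muE (X ω)) := by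
    filter_upwards [hmuY, hmuE, hmuYE, hpos, hmuEpos, hπsv] with ω h1 h2 h3 h4 h5 h6
    have hq : πt (X ω) ≠ 0 := ne_of_gt (lt_of_lt_of_le hε h4.1)
    have hp : tπt (X ω) ≠ 0 := (hpb (X ω)).ne'
    have hm1 : tm1 (X ω) ≠ 0 := (hmb (X ω)).ne'
    have he : muE (X ω) ≠ 0 := ne_of_gt (lt_of_lt_of_le hε h5)
    have hc1' : c1 ω = muY (X ω) * πt (X ω) := by rw [h1, div_mul_cancel₀ _ hq]
    have hc2' : c2 ω = muE (X ω) * πt (X ω) := by rw [h2, div_mul_cancel₀ _ hq]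
    have hc3' : c3 ω = muYE (X ω) * πt (X ω) := by rw [h3, div_mul_cancel₀ _ hq]
    rw [hc1', hc2', hc3', ← h6]
    simp only [hg1def, hg2def, hg3def]
    field_simp
    ring
  -- integrability of the remainder integrand
  have hRint : Integrable (fun ω =>
      ((muYE (X ω) * tm1 (X ω) - tmY (X ω) * muE (X ω)) / (tπt (X ω) * tm1 (X ω))) *
        ((1 - tπt (X ω)) * πt (X ω) / tm1 (X ω) - πs (X ω) * tπt (X ω) / muE (X ω))) P := by
    have hsub : Integrable (fun ω => (c1 ω + g1 (X ω) * c3 ω - g2 (X ω) * c2 ω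
        + g3 (X ω) * c4 ω) - (muY (X ω) * πt (X ω)
        + (muYE (X ω) / muE (X ω)) * πs (X ω))) P := hcombint.sub hψint
    refine hsub.congr ?_
    filter_upwards [haeq] with ω hω
    linarith [hω]
  -- put everything together
  rw [step1, integral_congr_ae haeq, integral_add hψint hRint]
  ring
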